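/- Let $0 < \beta_2 \leq 1$, $\epsilon > 0$, and let $(a_n)_{n \geq 1}$ be a non-negative real sequence. Define $b_n = \sum_{j=1}^n \beta_2^{n-j} a_j$. Then for all $N \geq 1$, $\sum_{j=1}^N \frac{a_j}{\epsilon + b_j} \leq \ln\left(1 + \frac{b_N}{\epsilon}\right) - N \ln(\beta_2)$. -/

import Mathlib

/-- Sum-of-ratios lemma: the sum of ratios where each denominator is `ε` plus an
exponentially decayed sum of past numerators is bounded by a logarithmic term. -/
theorem sum_ratio_bound (β₂ ε : ℝ) (hβ₂0 : 0 < β₂) (hβ₂1 : β₂ ≤ 1) (hε : 0 < ε)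
    (a : ℕ → ℝ) (ha : ∀ n, 1 ≤ n → 0 ≤ a n)
    (b : ℕ → ℝ) (hb : ∀ n, b n = ∑ j ∈ Finset.Icc 1 n, β₂ ^ (n - j) * a j)
    (N : ℕ) (hN : 1 ≤ N) :
    ∑ j ∈ Finset.Icc 1 N, a j / (ε + b j)
      ≤ Real.log (1 + b N / ε) - N * Real.log β₂ := by
  have hb0 : b 0 = 0 := by simp [hb]
  have hbnn : ∀ n, 0 ≤ b n := by
    intro n
    rw [hb]
    apply Finset.sum_nonneg
    intro j hj
    simp only [Finset.mem_Icc] at hj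
    exact mul_nonneg (pow_nonneg hβ₂0.le _) (ha j hj.1)
  have hrec : ∀ n, b (n+1) = β₂ * b n + a (n+1) := by
    intro n
    rw [hb, hb, Finset.sum_Icc_succ_top (by omega : 1 ≤ n+1)]
    simp only [Nat.sub_self, pow_zero, one_mul]
    congr 1
    rw [Finset.mul_sum]
    apply Finset.sum_congr rfl
    intro j hj
    simp only [Finset.mem_Icc] at hj
    rw [← mul_assoc, ← pow_succ']
    congr 2
    omega
  have key : ∀ n : ℕ, ∑ j ∈ Finset.Icc 1 n, a j / (ε + b j)
      ≤ Real.log (ε + b n) - Real.log ε - n * Real.log β₂ := by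
    intro n
    induction n with
    | zero => simp [hb0]
    | succ n ih =>
      rw [Finset.sum_Icc_succ_top (by omega : 1 ≤ n+1)]
      have hbn := hbnn n
      have hc : 0 < ε + β₂ * b n := by nlinarith
      have hd : 0 < ε + b (n+1) := by
        have := hbnn (n+1); linarith
      have han : 0 ≤ a (n+1) := ha (n+1) (by omega)
      have hdc : ε + b (n+1) = (ε + β₂ * b n) + a (n+1) := by rw [hrec]; ring
      have step : a (n+1) / (ε + b (n+1))
          ≤ Real.log (ε + b (n+1)) - Real.log (ε + β₂ * b n) := by
        have h1 : Real.log ((ε + β₂ * b n) / (ε + b (n+1)))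
            ≤ (ε + β₂ * b n) / (ε + b (n+1)) - 1 :=
          Real.log_le_sub_one_of_pos (by positivity)
        rw [Real.log_div hc.ne' hd.ne'] at h1
        have h2 : a (n+1) / (ε + b (n+1)) = 1 - (ε + β₂ * b n) / (ε + b (n+1)) := by
          field_simp
          linarith [hdc]
        rw [h2]; linarith
      have step2 : Real.log β₂ + Real.log (ε + b n) ≤ Real.log (ε + β₂ * b n) := by
        rw [← Real.log_mul hβ₂0.ne' (by linarith : (0:ℝ) < ε + b n).ne']
        apply Real.log_le_log (by nlinarith)
        nlinarith
      push_cast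
      nlinarith [step, step2, ih]
  have hN' := key N
  have hlog : Real.log (1 + b N / ε) = Real.log (ε + b N) - Real.log ε := by
    rw [← Real.log_div (by linarith [hbnn N] : (0:ℝ) < ε + b N).ne' hε.ne']
    congr 1
    field_simp
  rw [hlog]
  linarith
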